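/- A nonempty 3-graph H is avoidable if and only if m_pair(H) ≥ 1/2. -/

import Mathlib

/-- A 3-uniform hypergraph on a finite subset of `ℕ`. -/
structure ThreeGraph where
  verts : Finset ℕ
  edges : Finset (Finset ℕ)
  card_eq : ∀ e ∈ edges, e.card = 3
  subset_verts : ∀ e ∈ edges, e ⊆ verts

/-- `χ` (on 3-element subsets of `{0, …, N-1}`) contains a copy of `H` in color `c`
(`true` = red, `false` = blue). -/
def hasMonoCopy (N : ℕ) (χ : Finset ℕ → Bool) (H : ThreeGraph) (c : Bool) : Prop :=
  ∃ φ : ℕ → ℕ, Set.InjOn φ ↑H.verts ∧ (∀ v ∈ H.verts, φ v < N) ∧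
    ∀ e ∈ H.edges, χ (e.image φ) = c

/-- The Ramsey number `r(G, H)`: the least `N` such that every red/blue coloring of the
triples of an `N`-element set contains a red copy of `G` or a blue copy of `H`. -/
noncomputable def ramsey (G H : ThreeGraph) : ℕ :=
  sInf {N : ℕ | ∀ χ : Finset ℕ → Bool,
    hasMonoCopy N χ G true ∨ hasMonoCopy N χ H false}

/-- The complete tripartite 3-graph `K_{a,b,c}^{(3)}`. -/
def tripartite (a b c : ℕ) : ThreeGraph where
  verts := Finset.range (a + b + c)
  edges := ((Finset.range (a + b + c)).powersetCard 3).filter (fun e =>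
    (e.filter (fun x => x < a)).card = 1 ∧
    (e.filter (fun x => a ≤ x ∧ x < a + b)).card = 1 ∧
    (e.filter (fun x => a + b ≤ x)).card = 1)
  card_eq := fun e he => (Finset.mem_powersetCard.mp (Finset.mem_filter.mp he).1).2
  subset_verts := fun e he => (Finset.mem_powersetCard.mp (Finset.mem_filter.mp he).1).1

/-- The complete 3-graph `K_n^{(3)}`. -/
def completeTG (n : ℕ) : ThreeGraph where
  verts := Finset.range n
  edges := (Finset.range n).powersetCard 3
  card_eq := fun e he => (Finset.mem_powersetCard.mp he).2
  subset_verts := fun e he => (Finset.mem_powersetCard.mp he).1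

/-- The shadow of a set of 3-edges: all 2-element subsets of its edges. -/
def shadowOf (E : Finset (Finset ℕ)) : Finset (Finset ℕ) :=
  E.biUnion (fun e => e.powersetCard 2)

/-- An oriented 3-graph (given by its edge set of ordered triples): it contains at most one of
the six coordinate permutations of any ordered triple and no triple with a repeated
coordinate. -/
def Oriented (E : Set (ℕ × ℕ × ℕ)) : Prop :=
  ∀ a b c : ℕ, (a, b, c) ∈ E →
    (a ≠ b ∧ b ≠ c ∧ a ≠ c) ∧
    (a, c, b) ∉ E ∧ (b, a, c) ∉ E ∧ (b, c, a) ∉ E ∧ (c, a, b) ∉ E ∧ (c, b, a) ∉ E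

/-- `f` is a pair homomorphism from `H`, ordered by the (injective on `V(H)`) function `ord`,
to the oriented 3-graph with edge set `E`. -/
def IsPairHom (H : ThreeGraph) (ord : ℕ → ℕ) (E : Set (ℕ × ℕ × ℕ))
    (f : Finset ℕ → ℕ) : Prop :=
  Set.InjOn ord ↑H.verts ∧
  ∀ e ∈ H.edges, ∀ u v w : ℕ, e = {u, v, w} → ord u < ord v → ord v < ord w →
    (f {u, v} ≠ f {v, w} ∧ f {v, w} ≠ f {u, w} ∧ f {u, v} ≠ f {u, w}) ∧
    (f {u, v}, f {v, w}, f {u, w}) ∈ E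

/-- `v(f(H'))` for the subhypergraph with edge set `E'`: the number of vertices of the image,
i.e. the size of the image of the shadow of `E'` under `f`. -/
def imageVerts (f : Finset ℕ → ℕ) (E' : Finset (Finset ℕ)) : ℕ :=
  ((shadowOf E').image f).card

/-- `e(f(H'))` for the subhypergraph with edge set `E'`: the number of distinct image triples. -/
noncomputable def imageEdges (ord : ℕ → ℕ) (f : Finset ℕ → ℕ)
    (E' : Finset (Finset ℕ)) : ℕ :=
  Set.ncard {p : ℕ × ℕ × ℕ | ∃ e ∈ E', ∃ u v w : ℕ,
    e = ({u, v, w} : Finset ℕ) ∧ ord u < ord v ∧ ord v < ord w ∧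
    p = (f {u, v}, f {v, w}, f {u, w})}

/-- The pair density `m_pair(H)`: the minimum, over all orderings of `V(H)` and all pair
homomorphisms `f` from `H` to any oriented 3-graph, of the maximum over all nonempty
subhypergraphs `H' ⊆ H` of `e(f(H')) / v(f(H'))`. -/
noncomputable def mpair (H : ThreeGraph) : ℝ :=
  sInf {q : ℝ | ∃ (ord : ℕ → ℕ) (E : Set (ℕ × ℕ × ℕ)) (f : Finset ℕ → ℕ),
    Oriented E ∧ IsPairHom H ord E f ∧
    q = sSup {r : ℝ | ∃ E' : Finset (Finset ℕ), E' ⊆ H.edges ∧ E'.Nonempty ∧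
      r = (imageEdges ord f E' : ℝ) / (imageVerts f E' : ℝ)}}

/-- The set of 3-edges `E` contains a Berge cycle: `t ≥ 2` distinct vertices and `t` distinct
edges with `v i, v (i+1) ∈ e i` cyclically. -/
def HasBergeCycle (E : Set (Finset ℕ)) : Prop :=
  ∃ t : ℕ, 2 ≤ t ∧ ∃ (v : ZMod t → ℕ) (e : ZMod t → Finset ℕ),
    Function.Injective v ∧ Function.Injective e ∧
    ∀ i : ZMod t, e i ∈ E ∧ v i ∈ e i ∧ v (i + 1) ∈ e i

/-- `H` is avoidable: for every ordering and every pair homomorphism `f` from `H` to an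
oriented 3-graph, the 3-graph of underlying vertex sets of the image edges has a Berge cycle. -/
def Avoidable (H : ThreeGraph) : Prop :=
  ∀ (ord : ℕ → ℕ) (E : Set (ℕ × ℕ × ℕ)) (f : Finset ℕ → ℕ),
    Oriented E → IsPairHom H ord E f →
    HasBergeCycle {s : Finset ℕ | ∃ e ∈ H.edges, ∃ u v w : ℕ,
      e = ({u, v, w} : Finset ℕ) ∧ ord u < ord v ∧ ord v < ord w ∧
      s = ({f {u, v}, f {v, w}, f {u, w}} : Finset ℕ)}

/-- A linear 3-graph: any two distinct edges share at most one vertex. -/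
def LinearTG (F : ThreeGraph) : Prop :=
  ∀ e₁ ∈ F.edges, ∀ e₂ ∈ F.edges, e₁ ≠ e₂ → (e₁ ∩ e₂).card ≤ 1
namespace AvoidProof
open Finset

open Finset

def bstep (T : Finset (Finset ℕ)) (a b : ℕ) : Prop := ∃ g ∈ T, a ∈ g ∧ b ∈ g ∧ a ≠ b
def Conn (T : Finset (Finset ℕ)) (a b : ℕ) : Prop := Relation.ReflTransGen (bstep T) a b
lemma bstep_symm {T a b} (h : bstep T a b) : bstep T b a := by
  obtain ⟨g, hg, ha, hb, hne⟩ := h; exact ⟨g, hg, hb, ha, hne.symm⟩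
lemma Conn.symm {T a b} (h : Conn T a b) : Conn T b a :=
  by haveI : Std.Symm (bstep T) := ⟨fun _ _ => bstep_symm⟩; exact Std.Symm.symm (r := Relation.ReflTransGen (bstep T)) a b h
lemma Conn.trans {T a b c} (h : Conn T a b) (h' : Conn T b c) : Conn T a c :=
  Relation.ReflTransGen.trans h h'
lemma Conn.mono {T T' a b} (hT : T ⊆ T') (h : Conn T a b) : Conn T' a b :=
  Relation.ReflTransGen.mono (r := bstep T) (p := bstep T') (by intro x y hxy; obtain ⟨g, hg, hx, hy, hne⟩ := hxy; exact ⟨g, hT hg, hx, hy, hne⟩) _ _ h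
lemma Conn.refl {T a} : Conn T a a := Relation.ReflTransGen.refl
lemma conn_mem {T a b} (h : Conn T a b) : a = b ∨ (a ∈ T.biUnion id ∧ b ∈ T.biUnion id) := by
  induction h with
  | refl => exact Or.inl rfl
  | tail h step ih =>
    obtain ⟨g, hg, hx, hy, hne⟩ := step
    rcases ih with rfl | ⟨ha, hb⟩
    · exact Or.inr ⟨mem_biUnion.2 ⟨g, hg, hx⟩, mem_biUnion.2 ⟨g, hg, hy⟩⟩
    · exact Or.inr ⟨ha, mem_biUnion.2 ⟨g, hg, hy⟩⟩
lemma conn_insert {e T a b} (h : Conn (insert e T) a b) :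
    Conn T a b ∨ ∃ p ∈ e, ∃ q ∈ e, Conn T a p ∧ Conn T q b := by
  induction h with
  | refl => exact Or.inl Conn.refl
  | tail h step ih =>
    obtain ⟨g, hg, hx, hy, hne⟩ := step
    rcases Finset.mem_insert.1 hg with rfl | hgT
    · rcases ih with h' | ⟨p, hp, q, hq, h1, h2⟩
      · exact Or.inr ⟨_, hx, _, hy, h', Conn.refl⟩
      · exact Or.inr ⟨p, hp, _, hy, h1, Conn.refl⟩
    · rcases ih with h' | ⟨p, hp, q, hq, h1, h2⟩
      · exact Or.inl (h'.tail ⟨g, hgT, hx, hy, hne⟩)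
      · exact Or.inr ⟨p, hp, q, hq, h1, h2.tail ⟨g, hgT, hx, hy, hne⟩⟩

/-- Acyclic counting: if no edge can be "closed" through the rest, the vertex count is large. -/
lemma acyclic_count (T : Finset (Finset ℕ)) (h3 : ∀ e ∈ T, e.card = 3)
    (hnc : ∀ e ∈ T, ∀ x ∈ e, ∀ y ∈ e, x ≠ y → ¬ Conn (T.erase e) x y) :
    ∃ R : Finset ℕ, R ⊆ T.biUnion id ∧
      (∀ u ∈ T.biUnion id, ∃ r ∈ R, Conn T r u) ∧
      (∀ r ∈ R, ∀ s ∈ R, r ≠ s → ¬ Conn T r s) ∧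
      2 * T.card + R.card ≤ (T.biUnion id).card ∧ (T.Nonempty → R.Nonempty) := by
  classical
  induction T using Finset.strongInduction with
  | _ T ih =>
  rcases T.eq_empty_or_nonempty with rfl | ⟨e, he⟩
  · exact ⟨∅, by simp, by simp, by simp, by simp, by simp⟩
  set T' := T.erase e with hT'
  have hT'ss : T' ⊂ T := Finset.erase_ssubset he
  have hTins : T = insert e T' := by
    rw [hT', Finset.insert_erase he]
  have h3' : ∀ g ∈ T', g.card = 3 := fun g hg => h3 g (Finset.mem_of_mem_erase hg)
  have hnc' : ∀ g ∈ T', ∀ x ∈ g, ∀ y ∈ g, x ≠ y → ¬ Conn (T'.erase g) x y := by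
    intro g hg x hx y hy hxy hconn
    exact hnc g (Finset.mem_of_mem_erase hg) x hx y hy hxy
      (hconn.mono (Finset.erase_subset_erase _ (Finset.erase_subset _ _)))
  obtain ⟨R', hR'sub, hR'cov, hR'pw, hR'card, _⟩ := ih T' hT'ss h3' hnc'
  set U' := T'.biUnion id with hU'
  have hU : T.biUnion id = e ∪ U' := by rw [hTins, Finset.biUnion_insert]; rfl
  -- no two vertices of e are connected in T'
  have hncE : ∀ x ∈ e, ∀ y ∈ e, x ≠ y → ¬ Conn T' x y := fun x hx y hy hxy => hnc e he x hx y hy hxy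
  -- representatives
  have hrepex : ∀ v ∈ U', ∃ r, r ∈ R' ∧ Conn T' r v := by
    intro v hv; obtain ⟨r, hr, hc⟩ := hR'cov v hv; exact ⟨r, hr, hc⟩
  set repF : ℕ → ℕ := fun v => if h : ∃ r, r ∈ R' ∧ Conn T' r v then h.choose else v with hrepF
  have hrep1 : ∀ v ∈ U', repF v ∈ R' ∧ Conn T' (repF v) v := by
    intro v hv
    have h := hrepex v hv
    simp only [hrepF, dif_pos h]
    exact h.choose_spec
  -- connected elements of R' are equal
  have hR'eq : ∀ r ∈ R', ∀ s ∈ R', Conn T' r s → r = s := by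
    intro r hr s hs hc; by_contra hne; exact hR'pw r hr s hs hne hc
  set old := e ∩ U' with hold
  set img := old.image repF with himg
  have himgsub : img ⊆ R' := by
    intro r hr; obtain ⟨v, hv, rfl⟩ := Finset.mem_image.1 hr
    exact (hrep1 v (Finset.mem_of_mem_inter_right hv)).1
  have himgcard : img.card = old.card := by
    rw [himg]
    apply Finset.card_image_of_injOn
    intro v hv w hw hvw
    have h1 := hrep1 v (Finset.mem_of_mem_inter_right hv)
    have h2 := hrep1 w (Finset.mem_of_mem_inter_right hw)
    by_contra hne
    exact hncE v (Finset.mem_of_mem_inter_left hv) w (Finset.mem_of_mem_inter_left hw) hne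
      ((h1.2.symm.trans (hvw ▸ h2.2)))
  -- key: an R'-element connected (in T') to a vertex of e is in img
  have hkey : ∀ s ∈ R', ∀ q ∈ e, Conn T' q s → s ∈ img := by
    intro s hs q hq hc
    have hqU' : q ∈ U' := by
      rcases conn_mem hc with rfl | ⟨h1, _⟩
      · exact hR'sub hs
      · exact h1
    have hqold : q ∈ old := Finset.mem_inter.2 ⟨hq, hqU'⟩
    have h1 := hrep1 q hqU'
    have : repF q = s := hR'eq _ h1.1 _ hs (h1.2.trans hc)
    exact Finset.mem_image.2 ⟨q, hqold, this⟩
  obtain ⟨x, y, z, hxy, hxz, hyz, hexyz⟩ := Finset.card_eq_three.1 (h3 e he)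
  have hx : x ∈ e := by rw [hexyz]; simp
  set R : Finset ℕ := insert x (R' \ img) with hR
  -- x ∉ R' \ img
  have hxnot : x ∉ R' \ img := by
    intro hmem
    have hxR' := (Finset.mem_sdiff.1 hmem).1
    have : x ∈ img := hkey x hxR' x hx Conn.refl
    exact (Finset.mem_sdiff.1 hmem).2 this
  -- every vertex of e is Conn T to x
  have hconnE : ∀ p ∈ e, Conn T x p := by
    intro p hp
    rcases eq_or_ne x p with rfl | hne
    · exact Conn.refl
    · exact Relation.ReflTransGen.single ⟨e, he, hx, hp, hne⟩
  have hT'T : T' ⊆ T := Finset.erase_subset _ _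
  refine ⟨R, ?_, ?_, ?_, ?_, fun _ => ⟨x, Finset.mem_insert_self _ _⟩⟩
  · -- R ⊆ U
    rw [hU]
    intro r hr
    rcases Finset.mem_insert.1 hr with rfl | hr
    · exact Finset.mem_union_left _ hx
    · exact Finset.mem_union_right _ (hR'sub (Finset.mem_sdiff.1 hr).1)
  · -- covering
    intro u hu
    rw [hU] at hu
    rcases Finset.mem_union.1 hu with hu | hu
    · exact ⟨x, Finset.mem_insert_self _ _, hconnE u hu⟩
    · obtain ⟨r, hr, hc⟩ := hR'cov u hu
      by_cases hri : r ∈ img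
      · obtain ⟨v, hv, rfl⟩ := Finset.mem_image.1 hri
        have h1 := hrep1 v (Finset.mem_of_mem_inter_right hv)
        refine ⟨x, Finset.mem_insert_self _ _, ?_⟩
        exact (hconnE v (Finset.mem_of_mem_inter_left hv)).trans
          ((h1.2.symm.trans hc).mono hT'T)
      · exact ⟨r, Finset.mem_insert_of_mem (Finset.mem_sdiff.2 ⟨hr, hri⟩), hc.mono hT'T⟩
  · -- pairwise non-connected
    have main : ∀ s ∈ R' \ img, ¬ Conn T x s ∧ ∀ r ∈ R' \ img, r ≠ s → ¬ Conn T r s := by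
      intro s hs
      obtain ⟨hsR', hsimg⟩ := Finset.mem_sdiff.1 hs
      constructor
      · intro hc
        rw [hTins] at hc
        rcases conn_insert hc with hc' | ⟨p, hp, q, hq, h1, h2⟩
        · exact hsimg (hkey s hsR' x hx hc')
        · exact hsimg (hkey s hsR' q hq h2)
      · intro r hr hrs hc
        obtain ⟨hrR', hrimg⟩ := Finset.mem_sdiff.1 hr
        rw [hTins] at hc
        rcases conn_insert hc with hc' | ⟨p, hp, q, hq, h1, h2⟩
        · exact hrs (hR'eq r hrR' s hsR' hc')
        · exact hsimg (hkey s hsR' q hq h2)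
    intro r hr s hs hrs hc
    rcases Finset.mem_insert.1 hr with hr1 | hr2
    · rcases Finset.mem_insert.1 hs with hs1 | hs2
      · exact hrs (hr1.trans hs1.symm)
      · exact (main s hs2).1 (hr1 ▸ hc)
    · rcases Finset.mem_insert.1 hs with hs1 | hs2
      · exact (main r hr2).1 (hs1 ▸ hc.symm)
      · exact (main s hs2).2 r hr2 hrs hc
  · -- counting
    have hUcard : (e \ U').card + U'.card = (T.biUnion id).card := by
      rw [hU]; exact Finset.card_sdiff_add_card e U'
    have hold_sub : old ⊆ e := Finset.inter_subset_left
    have heU' : e \ U' = e \ old := (Finset.sdiff_inter_self_left e U').symm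
    have hesd : (e \ U').card = 3 - old.card := by
      rw [heU', Finset.card_sdiff_of_subset hold_sub, h3 e he]
    have holdcard : old.card ≤ 3 := by
      have h1 := Finset.card_le_card hold_sub
      have h2 := h3 e he
      omega
    have hRcard : R.card = (R' \ img).card + 1 := by
      rw [hR, Finset.card_insert_of_notMem hxnot]
    have hsdcard : (R' \ img).card = R'.card - img.card := Finset.card_sdiff_of_subset himgsub
    have himgle : img.card ≤ R'.card := Finset.card_le_card himgsub
    have hT'card : T'.card = T.card - 1 := Finset.card_erase_of_mem he
    have hTpos : 1 ≤ T.card := Finset.card_pos.2 ⟨e, he⟩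
    have he3 : e.card = 3 := h3 e he
    omega

open Finset

def Walk (T : Finset (Finset ℕ)) (a b : ℕ) (n : ℕ) : Prop :=
  ∃ (vs : ℕ → ℕ) (es : ℕ → Finset ℕ), vs 0 = a ∧ vs n = b ∧
    ∀ i < n, es i ∈ T ∧ vs i ∈ es i ∧ vs (i+1) ∈ es i

lemma walk_of_conn {T : Finset (Finset ℕ)} {a b : ℕ} (h : Conn T a b) : ∃ n, Walk T a b n := by
  induction h with
  | refl => exact ⟨0, fun _ => a, fun _ => ∅, rfl, rfl, by omega⟩
  | @tail c d h step ih =>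
    obtain ⟨n, vs, es, h0, hn, hs⟩ := ih
    obtain ⟨g, hg, hc, hd, _⟩ := step
    refine ⟨n+1, fun i => if i ≤ n then vs i else d, fun i => if i < n then es i else g,
      by simp [h0], by simp, ?_⟩
    intro i hi
    rcases Nat.lt_or_ge i n with h1 | h1
    · obtain ⟨a1, a2, a3⟩ := hs i h1
      refine ⟨by simp [h1, a1], ?_, ?_⟩
      · simp only [if_pos h1, if_pos (Nat.le_of_lt h1)]; exact a2
      · simp only [if_pos h1, if_pos (by omega : i + 1 ≤ n)]; exact a3
    · have hie : i = n := by omega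
      refine ⟨by simp [hie, hg], ?_, ?_⟩
      · rw [hie]; simp only [if_neg (lt_irrefl n), if_pos (le_refl n), hn]; exact hc
      · rw [hie]; simp only [if_neg (lt_irrefl n), if_neg (by omega : ¬ n + 1 ≤ n)]; exact hd

lemma walk_shortcut_v {T : Finset (Finset ℕ)} {a b n : ℕ} (vs : ℕ → ℕ) (es : ℕ → Finset ℕ)
    (h0 : vs 0 = a) (hn : vs n = b)
    (hstep : ∀ i < n, es i ∈ T ∧ vs i ∈ es i ∧ vs (i+1) ∈ es i)
    {i j : ℕ} (hij : i < j) (hjn : j ≤ n) (hv : vs i = vs j) : Walk T a b (n - (j - i)) := by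
  set d := j - i with hd
  refine ⟨fun k => if k ≤ i then vs k else vs (k + d), fun k => if k < i then es k else es (k + d),
    by simp [h0], ?_, ?_⟩
  · by_cases h : n - d ≤ i
    · simp only [if_pos h]
      have h1 : n - d = i := by omega
      have h2 : j = n := by omega
      rw [h1, hv, h2, hn]
    · simp only [if_neg h]
      have : n - d + d = n := by omega
      rw [this, hn]
  · intro k hk
    by_cases h1 : k < i
    · obtain ⟨a1, a2, a3⟩ := hstep k (by omega)
      refine ⟨by simp [h1, a1], ?_, ?_⟩
      · simp only [if_pos h1, if_pos (Nat.le_of_lt h1)]; exact a2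
      · rcases Nat.lt_or_ge (k+1) (i+1) with h2 | h2
        · simp only [if_pos h1, if_pos (by omega : k + 1 ≤ i)]; exact a3
        · have : k + 1 = i := by omega
          simp only [if_pos h1, if_pos (by omega : k + 1 ≤ i)]; exact a3
    · have hkd : k + d < n := by omega
      obtain ⟨a1, a2, a3⟩ := hstep (k + d) hkd
      refine ⟨by simp [h1, a1], ?_, ?_⟩
      · by_cases h2 : k ≤ i
        · have : k = i := by omega
          subst this
          simp only [if_neg h1, if_pos (le_refl k), hv]
          have : k + d = j := by omega
          rw [this] at a2 ⊢
          simpa [hd] using a2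
        · simp only [if_neg h1, if_neg h2]; exact a2
      · simp only [if_neg h1, if_neg (by omega : ¬ k + 1 ≤ i)]
        have : k + 1 + d = k + d + 1 := by omega
        rw [this]; exact a3

lemma walk_shortcut_e {T : Finset (Finset ℕ)} {a b n : ℕ} (vs : ℕ → ℕ) (es : ℕ → Finset ℕ)
    (h0 : vs 0 = a) (hn : vs n = b)
    (hstep : ∀ i < n, es i ∈ T ∧ vs i ∈ es i ∧ vs (i+1) ∈ es i)
    {i j : ℕ} (hij : i < j) (hjn : j < n) (he : es i = es j) : Walk T a b (n - (j - i)) := by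
  set d := j - i with hd
  refine ⟨fun k => if k ≤ i then vs k else vs (k + d), fun k => if k ≤ i then es k else es (k + d),
    by simp [h0], ?_, ?_⟩
  · have h : ¬ n - d ≤ i := by omega
    simp only [if_neg h]
    have : n - d + d = n := by omega
    rw [this, hn]
  · intro k hk
    rcases Nat.lt_or_ge k i with h1 | h1
    · obtain ⟨a1, a2, a3⟩ := hstep k (by omega)
      exact ⟨by simp [Nat.le_of_lt h1, a1], by simp only [if_pos (Nat.le_of_lt h1)]; exact a2,
        by simp only [if_pos (by omega : k + 1 ≤ i), if_pos (Nat.le_of_lt h1)]; exact a3⟩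
    · rcases Nat.eq_or_lt_of_le h1 with h2 | h2
      · -- i = k
        have hik : i = k := h2
        obtain ⟨a1, a2, a3⟩ := hstep k (by omega)
        obtain ⟨b1, b2, b3⟩ := hstep (k + d) (by omega)
        refine ⟨by simp only [if_pos (by omega : k ≤ i)]; exact a1,
          by simp only [if_pos (by omega : k ≤ i)]; exact a2, ?_⟩
        simp only [if_neg (by omega : ¬ k + 1 ≤ i), if_pos (by omega : k ≤ i)]
        have hjj : k + d = j := by omega
        have hke : es k = es (k + d) := by rw [hjj, ← hik]; exact he
        have hj' : k + 1 + d = k + d + 1 := by omega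
        rw [hke, hj']
        exact b3
      · have hkd : k + d < n := by omega
        obtain ⟨a1, a2, a3⟩ := hstep (k + d) hkd
        refine ⟨by simp only [if_neg (by omega : ¬ k ≤ i)]; exact a1,
          by simp only [if_neg (by omega : ¬ k ≤ i)]; exact a2, ?_⟩
        simp only [if_neg (by omega : ¬ k + 1 ≤ i), if_neg (by omega : ¬ k ≤ i)]
        have : k + 1 + d = k + d + 1 := by omega
        rw [this]; exact a3

lemma exists_good_walk {T : Finset (Finset ℕ)} {a b : ℕ} (h : Conn T a b) (hab : a ≠ b) :
    ∃ (n : ℕ) (vs : ℕ → ℕ) (es : ℕ → Finset ℕ), 1 ≤ n ∧ vs 0 = a ∧ vs n = b ∧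
      (∀ i ≤ n, ∀ j ≤ n, vs i = vs j → i = j) ∧
      (∀ i < n, ∀ j < n, es i = es j → i = j) ∧
      (∀ i < n, es i ∈ T ∧ vs i ∈ es i ∧ vs (i+1) ∈ es i) := by
  have hex : ∃ n, Walk T a b n := walk_of_conn h
  classical
  set n := Nat.find hex with hn
  obtain ⟨vs, es, h0, hend, hs⟩ : Walk T a b n := Nat.find_spec hex
  have hmin : ∀ m < n, ¬ Walk T a b m := fun m hm => Nat.find_min hex hm
  have hn1 : 1 ≤ n := by
    rcases Nat.eq_zero_or_pos n with h1 | h1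
    · exfalso; apply hab; rw [← h0, ← hend, h1]
    · exact h1
  have hvinj : ∀ i ≤ n, ∀ j ≤ n, vs i = vs j → i = j := by
    have aux : ∀ i j, i < j → j ≤ n → vs i ≠ vs j := by
      intro i j hij hjn hv
      have hw := walk_shortcut_v vs es h0 hend hs hij hjn hv
      exact hmin _ (by omega) hw
    intro i hi j hj hv
    rcases lt_trichotomy i j with h1 | h1 | h1
    · exact absurd hv (aux i j h1 hj)
    · exact h1
    · exact absurd hv.symm (aux j i h1 hi)
  have heinj : ∀ i < n, ∀ j < n, es i = es j → i = j := by
    have aux : ∀ i j, i < j → j < n → es i ≠ es j := by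
      intro i j hij hjn hv
      have hw := walk_shortcut_e vs es h0 hend hs hij hjn hv
      exact hmin _ (by omega) hw
    intro i hi j hj hv
    rcases lt_trichotomy i j with h1 | h1 | h1
    · exact absurd hv (aux i j h1 hj)
    · exact h1
    · exact absurd hv.symm (aux j i h1 hi)
  exact ⟨n, vs, es, hn1, h0, hend, hvinj, heinj, hs⟩

open Finset

lemma bergeCycle_of_dense (T : Finset (Finset ℕ)) (h3 : ∀ e ∈ T, e.card = 3)
    (hT : T.Nonempty) (hcard : (T.biUnion id).card ≤ 2 * T.card) :
    ∃ t : ℕ, 2 ≤ t ∧ ∃ (v : ZMod t → ℕ) (e : ZMod t → Finset ℕ),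
      Function.Injective v ∧ Function.Injective e ∧
      ∀ i : ZMod t, e i ∈ T ∧ v i ∈ e i ∧ v (i + 1) ∈ e i := by
  classical
  have hclose : ∃ e₀ ∈ T, ∃ x ∈ e₀, ∃ y ∈ e₀, x ≠ y ∧ Conn (T.erase e₀) x y := by
    by_contra hno
    push_neg at hno
    obtain ⟨R, _, _, _, hcard', hRne⟩ := acyclic_count T h3
      (fun e he x hx y hy hxy => hno e he x hx y hy hxy)
    have h1 := Finset.card_pos.2 (hRne hT)
    have h2 := Finset.card_pos.2 hT
    omega
  obtain ⟨e₀, he₀, x, hx, y, hy, hxy, hconn⟩ := hclose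
  obtain ⟨n, vs, es, hn1, h0, hend, hvinj, heinj, hs⟩ := exists_good_walk hconn hxy
  have hne0 : NeZero (n + 1) := ⟨Nat.succ_ne_zero n⟩
  refine ⟨n + 1, by omega, fun i => vs i.val, fun i => if i.val < n then es i.val else e₀,
    ?_, ?_, ?_⟩
  · intro i j hij
    have h1 : i.val ≤ n := by have := ZMod.val_lt i; omega
    have h2 : j.val ≤ n := by have := ZMod.val_lt j; omega
    exact ZMod.val_injective (n+1) (hvinj i.val h1 j.val h2 hij)
  · intro i j hij
    simp only at hij
    have h1 : i.val ≤ n := by have := ZMod.val_lt i; omega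
    have h2 : j.val ≤ n := by have := ZMod.val_lt j; omega
    by_cases c1 : i.val < n <;> by_cases c2 : j.val < n
    · rw [if_pos c1, if_pos c2] at hij
      exact ZMod.val_injective (n+1) (heinj i.val c1 j.val c2 hij)
    · rw [if_pos c1, if_neg c2] at hij
      exact absurd ((hij ▸ (hs i.val c1).1)) (Finset.notMem_erase e₀ T)
    · rw [if_neg c1, if_pos c2] at hij
      exact absurd ((hij ▸ (hs j.val c2).1)) (Finset.notMem_erase e₀ T)
    · exact ZMod.val_injective (n+1) (by omega)
  · intro i
    have hvlt : i.val < n + 1 := ZMod.val_lt i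
    have hvadd : (i + 1).val = (i.val + 1) % (n + 1) := by
      rw [ZMod.val_add, ZMod.val_one_eq_one_mod]
      have : 1 % (n + 1) = 1 := Nat.mod_eq_of_lt (by omega)
      rw [this]
    by_cases c1 : i.val < n
    · obtain ⟨a1, a2, a3⟩ := hs i.val c1
      have : (i + 1).val = i.val + 1 := by rw [hvadd]; exact Nat.mod_eq_of_lt (by omega)
      simp only [if_pos c1, this]
      exact ⟨Finset.mem_of_mem_erase a1, a2, a3⟩
    · have hin : i.val = n := by omega
      have : (i + 1).val = 0 := by rw [hvadd, hin]; simp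
      simp only [hin, this, if_neg (lt_irrefl n), h0, hend]
      exact ⟨he₀, hy, hx⟩

open Finset

/-- uniqueness of the ordered decomposition of a triple -/
lemma triple_unique {ord : ℕ → ℕ} {V : Set ℕ} (hinj : Set.InjOn ord V)
    {u v w u' v' w' : ℕ} (hu : u ∈ V) (hv : v ∈ V) (hw : w ∈ V)
    (hu' : u' ∈ V) (hv' : v' ∈ V) (hw' : w' ∈ V)
    (h : ({u, v, w} : Finset ℕ) = {u', v', w'})
    (h1 : ord u < ord v) (h2 : ord v < ord w)
    (h1' : ord u' < ord v') (h2' : ord v' < ord w') :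
    u = u' ∧ v = v' ∧ w = w' := by
  have m1 : u = u' ∨ u = v' ∨ u = w' := by
    have : u ∈ ({u', v', w'} : Finset ℕ) := by rw [← h]; simp
    simpa using this
  have m2 : v = u' ∨ v = v' ∨ v = w' := by
    have : v ∈ ({u', v', w'} : Finset ℕ) := by rw [← h]; simp
    simpa using this
  have m3 : w = u' ∨ w = v' ∨ w = w' := by
    have : w ∈ ({u', v', w'} : Finset ℕ) := by rw [← h]; simp
    simpa using this
  have o1 : ord u = ord u' ∨ ord u = ord v' ∨ ord u = ord w' :=
    m1.imp (congrArg ord) (fun t => t.imp (congrArg ord) (congrArg ord))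
  have o2 : ord v = ord u' ∨ ord v = ord v' ∨ ord v = ord w' :=
    m2.imp (congrArg ord) (fun t => t.imp (congrArg ord) (congrArg ord))
  have o3 : ord w = ord u' ∨ ord w = ord v' ∨ ord w = ord w' :=
    m3.imp (congrArg ord) (fun t => t.imp (congrArg ord) (congrArg ord))
  have e1 : ord u = ord u' := by omega
  have e2 : ord v = ord v' := by omega
  have e3 : ord w = ord w' := by omega
  exact ⟨hinj hu hu' e1, hinj hv hv' e2, hinj hw hw' e3⟩

def decP (ord : ℕ → ℕ) (e : Finset ℕ) (p : ℕ × ℕ × ℕ) : Prop :=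
  e = {p.1, p.2.1, p.2.2} ∧ ord p.1 < ord p.2.1 ∧ ord p.2.1 < ord p.2.2

noncomputable def dec (ord : ℕ → ℕ) (e : Finset ℕ) : ℕ × ℕ × ℕ :=
  Classical.epsilon (decP ord e)

lemma mem_of_decP {ord : ℕ → ℕ} {e : Finset ℕ} {p : ℕ × ℕ × ℕ} (h : decP ord e p) :
    p.1 ∈ e ∧ p.2.1 ∈ e ∧ p.2.2 ∈ e := by
  rw [h.1]; refine ⟨by simp, by simp, by simp⟩

lemma decP_unique {ord : ℕ → ℕ} {V : Set ℕ} (hinj : Set.InjOn ord V) {e : Finset ℕ}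
    (hV : ↑e ⊆ V) {p q : ℕ × ℕ × ℕ} (hp : decP ord e p) (hq : decP ord e q) : p = q := by
  obtain ⟨pu, pv, pw⟩ := mem_of_decP hp
  obtain ⟨qu, qv, qw⟩ := mem_of_decP hq
  have h := triple_unique hinj (hV pu) (hV pv) (hV pw) (hV qu) (hV qv) (hV qw)
    (hp.1 ▸ hq.1) hp.2.1 hp.2.2 hq.2.1 hq.2.2
  exact Prod.ext h.1 (Prod.ext h.2.1 h.2.2)

lemma dec_exists {ord : ℕ → ℕ} {V : Set ℕ} (hinj : Set.InjOn ord V) {e : Finset ℕ}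
    (hV : ↑e ⊆ V) (h3 : e.card = 3) : ∃ p, decP ord e p := by
  obtain ⟨a, b, c, hab, hac, hbc, rfl⟩ := Finset.card_eq_three.1 h3
  have ha : a ∈ V := hV (by simp)
  have hb : b ∈ V := hV (by simp)
  have hc : c ∈ V := hV (by simp)
  have oab : ord a ≠ ord b := fun h => hab (hinj ha hb h)
  have oac : ord a ≠ ord c := fun h => hac (hinj ha hc h)
  have obc : ord b ≠ ord c := fun h => hbc (hinj hb hc h)
  rcases Nat.lt_or_ge (ord a) (ord b) with h1 | h1
  · rcases Nat.lt_or_ge (ord b) (ord c) with h2 | h2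
    · exact ⟨(a, b, c), rfl, by show ord a < ord b; omega, by show ord b < ord c; omega⟩
    · rcases Nat.lt_or_ge (ord a) (ord c) with h3' | h3'
      · exact ⟨(a, c, b), by ext t; simp; tauto, by show ord a < ord c; omega,
          by show ord c < ord b; omega⟩
      · exact ⟨(c, a, b), by ext t; simp; tauto, by show ord c < ord a; omega,
          by show ord a < ord b; omega⟩
  · rcases Nat.lt_or_ge (ord a) (ord c) with h2 | h2
    · exact ⟨(b, a, c), by ext t; simp; tauto, by show ord b < ord a; omega,
        by show ord a < ord c; omega⟩
    · rcases Nat.lt_or_ge (ord b) (ord c) with h3' | h3'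
      · exact ⟨(b, c, a), by ext t; simp; tauto, by show ord b < ord c; omega,
          by show ord c < ord a; omega⟩
      · exact ⟨(c, b, a), by ext t; simp; tauto, by show ord c < ord b; omega,
          by show ord b < ord a; omega⟩

lemma dec_spec {ord : ℕ → ℕ} {V : Set ℕ} (hinj : Set.InjOn ord V) {e : Finset ℕ}
    (hV : ↑e ⊆ V) (h3 : e.card = 3) : decP ord e (dec ord e) :=
  Classical.epsilon_spec (dec_exists hinj hV h3)

/-- two triples in an oriented graph with the same underlying vertex set are equal -/
lemma oriented_inj {E : Set (ℕ × ℕ × ℕ)} (hE : Oriented E) {q q' : ℕ × ℕ × ℕ}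
    (hq : q ∈ E) (hq' : q' ∈ E)
    (h : ({q.1, q.2.1, q.2.2} : Finset ℕ) = {q'.1, q'.2.1, q'.2.2}) : q = q' := by
  obtain ⟨a, b, c⟩ := q
  obtain ⟨a', b', c'⟩ := q'
  simp only at h
  obtain ⟨⟨d1, d2, d3⟩, n1, n2, n3, n4, n5⟩ := hE a b c hq
  obtain ⟨⟨d1', d2', d3'⟩, _, _, _, _, _⟩ := hE a' b' c' hq'
  have m1 : a' = a ∨ a' = b ∨ a' = c := by
    have : a' ∈ ({a, b, c} : Finset ℕ) := by rw [h]; simp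
    simpa using this
  have m2 : b' = a ∨ b' = b ∨ b' = c := by
    have : b' ∈ ({a, b, c} : Finset ℕ) := by rw [h]; simp
    simpa using this
  have m3 : c' = a ∨ c' = b ∨ c' = c := by
    have : c' ∈ ({a, b, c} : Finset ℕ) := by rw [h]; simp
    simpa using this
  rcases m1 with rfl | rfl | rfl <;> rcases m2 with rfl | rfl | rfl <;>
    rcases m3 with rfl | rfl | rfl <;> first | rfl | tauto

/-- 2-element subsets of a 3-set -/
lemma pc2 {u v w : ℕ} (huv : u ≠ v) (huw : u ≠ w) (hvw : v ≠ w) :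
    ({u, v, w} : Finset ℕ).powersetCard 2 = {{u, v}, {u, w}, {v, w}} := by
  ext s
  simp only [Finset.mem_powersetCard, Finset.mem_insert, Finset.mem_singleton]
  constructor
  · rintro ⟨hsub, hcard⟩
    obtain ⟨x, y, hxy, rfl⟩ := Finset.card_eq_two.1 hcard
    have hx : x = u ∨ x = v ∨ x = w := by
      have := hsub (Finset.mem_insert_self x {y}); simpa using this
    have hy : y = u ∨ y = v ∨ y = w := by
      have := hsub (by simp : y ∈ ({x, y} : Finset ℕ)); simpa using this
    rcases hx with rfl | rfl | rfl <;> rcases hy with rfl | rfl | rfl <;>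
      first
        | (exact absurd rfl hxy)
        | (left; rfl) | (right; left; rfl) | (right; right; rfl)
        | (left; exact Finset.pair_comm _ _) | (right; left; exact Finset.pair_comm _ _)
        | (right; right; exact Finset.pair_comm _ _)
  · rintro (rfl | rfl | rfl)
    · exact ⟨by intro t ht; simp at ht; rcases ht with rfl | rfl <;> simp,
        Finset.card_pair huv⟩
    · exact ⟨by intro t ht; simp at ht; rcases ht with rfl | rfl <;> simp,
        Finset.card_pair huw⟩
    · exact ⟨by intro t ht; simp at ht; rcases ht with rfl | rfl <;> simp,
        Finset.card_pair hvw⟩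






noncomputable def Ftrip (ord : ℕ → ℕ) (f : Finset ℕ → ℕ) (e : Finset ℕ) : ℕ × ℕ × ℕ :=
  (f {(dec ord e).1, (dec ord e).2.1}, f {(dec ord e).2.1, (dec ord e).2.2},
   f {(dec ord e).1, (dec ord e).2.2})

def gset (q : ℕ × ℕ × ℕ) : Finset ℕ := {q.1, q.2.1, q.2.2}

noncomputable def TTof (ord : ℕ → ℕ) (f : Finset ℕ → ℕ) (E' : Finset (Finset ℕ)) :
    Finset (Finset ℕ) := E'.image (fun e => gset (Ftrip ord f e))

variable {H : ThreeGraph} {ord : ℕ → ℕ} {E : Set (ℕ × ℕ × ℕ)} {f : Finset ℕ → ℕ}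
  {E' : Finset (Finset ℕ)}

lemma edge_coe {e : Finset ℕ} (he : e ∈ H.edges) : ↑e ⊆ (↑H.verts : Set ℕ) :=
  Finset.coe_subset.mpr (H.subset_verts e he)

lemma dec_edge (hf : IsPairHom H ord E f) {e : Finset ℕ} (he : e ∈ H.edges) :
    decP ord e (dec ord e) :=
  dec_spec hf.1 (edge_coe he) (H.card_eq e he)

lemma Ftrip_mem (hf : IsPairHom H ord E f) {e : Finset ℕ} (he : e ∈ H.edges) :
    ((Ftrip ord f e).1 ≠ (Ftrip ord f e).2.1 ∧ (Ftrip ord f e).2.1 ≠ (Ftrip ord f e).2.2 ∧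
      (Ftrip ord f e).1 ≠ (Ftrip ord f e).2.2) ∧ Ftrip ord f e ∈ E := by
  have hd := dec_edge hf he
  have := hf.2 e he (dec ord e).1 (dec ord e).2.1 (dec ord e).2.2 hd.1 hd.2.1 hd.2.2
  exact ⟨⟨this.1.1, this.1.2.1, this.1.2.2⟩, this.2⟩

lemma P_eq (hf : IsPairHom H ord E f) (hE' : E' ⊆ H.edges) :
    {p : ℕ × ℕ × ℕ | ∃ e ∈ E', ∃ u v w : ℕ,
      e = ({u, v, w} : Finset ℕ) ∧ ord u < ord v ∧ ord v < ord w ∧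
      p = (f {u, v}, f {v, w}, f {u, w})} = ↑(E'.image (Ftrip ord f)) := by
  ext p
  simp only [Set.mem_setOf_eq, Finset.coe_image, Set.mem_image, Finset.mem_coe]
  constructor
  · rintro ⟨e, he, u, v, w, rfl, h1, h2, rfl⟩
    refine ⟨_, he, ?_⟩
    have hd := dec_edge hf (hE' he)
    have hq : decP ord ({u, v, w} : Finset ℕ) (u, v, w) := ⟨rfl, h1, h2⟩
    have : dec ord ({u, v, w} : Finset ℕ) = (u, v, w) :=
      decP_unique hf.1 (edge_coe (hE' he)) hd hq
    rw [Ftrip, this]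
  · rintro ⟨e, he, rfl⟩
    have hd := dec_edge hf (hE' he)
    exact ⟨e, he, (dec ord e).1, (dec ord e).2.1, (dec ord e).2.2, hd.1, hd.2.1, hd.2.2, rfl⟩

lemma imageEdges_eq (hf : IsPairHom H ord E f) (hE' : E' ⊆ H.edges) :
    imageEdges ord f E' = (E'.image (Ftrip ord f)).card := by
  rw [imageEdges, P_eq hf hE', Set.ncard_coe_finset]

lemma TT_card (hE : Oriented E) (hf : IsPairHom H ord E f) (hE' : E' ⊆ H.edges) :
    (TTof ord f E').card = (E'.image (Ftrip ord f)).card := by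
  rw [TTof, show (fun e => gset (Ftrip ord f e)) = gset ∘ Ftrip ord f from rfl,
    ← Finset.image_image]
  apply Finset.card_image_of_injOn
  intro q hq q' hq' hqq
  simp only [Finset.coe_image, Set.mem_image, Finset.mem_coe] at hq hq'
  obtain ⟨e, he, rfl⟩ := hq
  obtain ⟨e', he', rfl⟩ := hq'
  exact oriented_inj hE (Ftrip_mem hf (hE' he)).2 (Ftrip_mem hf (hE' he')).2 hqq

lemma shadow_point (hf : IsPairHom H ord E f) {e : Finset ℕ} (he : e ∈ H.edges) :
    (e.powersetCard 2).image f = gset (Ftrip ord f e) := by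
  obtain ⟨h1, h2, h3⟩ := dec_edge hf he
  have d12 : (dec ord e).1 ≠ (dec ord e).2.1 := fun h => by rw [h] at h2; omega
  have d23 : (dec ord e).2.1 ≠ (dec ord e).2.2 := fun h => by rw [h] at h3; omega
  have d13 : (dec ord e).1 ≠ (dec ord e).2.2 := fun h => by rw [h] at h2; omega
  conv_lhs => rw [h1, pc2 d12 d13 d23]
  simp only [Finset.image_insert, Finset.image_singleton, gset, Ftrip]
  exact congrArg (insert (f {(dec ord e).1, (dec ord e).2.1}))
    (Finset.pair_comm (f {(dec ord e).1, (dec ord e).2.2})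
      (f {(dec ord e).2.1, (dec ord e).2.2}))

lemma imageVerts_eq (hf : IsPairHom H ord E f) (hE' : E' ⊆ H.edges) :
    imageVerts f E' = ((TTof ord f E').biUnion id).card := by
  rw [imageVerts, shadowOf, Finset.biUnion_image, TTof, Finset.image_biUnion]
  congr 1
  apply Finset.biUnion_congr rfl
  intro e he
  simp only [id]
  exact shadow_point hf (hE' he)

lemma TT_card3 (hf : IsPairHom H ord E f) (hE' : E' ⊆ H.edges) :
    ∀ s ∈ TTof ord f E', s.card = 3 := by
  intro s hs
  obtain ⟨e, he, rfl⟩ := Finset.mem_image.1 hs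
  obtain ⟨⟨d1, d2, d3⟩, _⟩ := Ftrip_mem hf (hE' he)
  exact Finset.card_eq_three.2 ⟨_, _, _, d1, d3, d2, rfl⟩

lemma TT_subS (hf : IsPairHom H ord E f) (hE' : E' ⊆ H.edges) :
    ∀ s ∈ TTof ord f E', ∃ e ∈ H.edges, ∃ u v w : ℕ,
      e = ({u, v, w} : Finset ℕ) ∧ ord u < ord v ∧ ord v < ord w ∧
      s = ({f {u, v}, f {v, w}, f {u, w}} : Finset ℕ) := by
  intro s hs
  obtain ⟨e, he, rfl⟩ := Finset.mem_image.1 hs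
  have hd := dec_edge hf (hE' he)
  exact ⟨e, hE' he, (dec ord e).1, (dec ord e).2.1, (dec ord e).2.2,
    hd.1, hd.2.1, hd.2.2, rfl⟩

/-- every edge of the image 3-graph is the `gset∘Ftrip` of an edge of `H` -/
lemma S_elt (hf : IsPairHom H ord E f) {s : Finset ℕ}
    (hs : ∃ e ∈ H.edges, ∃ u v w : ℕ,
      e = ({u, v, w} : Finset ℕ) ∧ ord u < ord v ∧ ord v < ord w ∧
      s = ({f {u, v}, f {v, w}, f {u, w}} : Finset ℕ)) :
    ∃ e ∈ H.edges, gset (Ftrip ord f e) = s := by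
  obtain ⟨e, he, u, v, w, rfl, h1, h2, rfl⟩ := hs
  refine ⟨_, he, ?_⟩
  have hd := dec_edge hf he
  have hq : decP ord ({u, v, w} : Finset ℕ) (u, v, w) := ⟨rfl, h1, h2⟩
  have heq : dec ord ({u, v, w} : Finset ℕ) = (u, v, w) :=
    decP_unique hf.1 (edge_coe he) hd hq
  rw [gset, Ftrip, heq]






noncomputable def f0 : Finset ℕ → ℕ :=
  fun s => if h : s.Nonempty then Nat.pair (s.min' h) (s.max' h) else 0

lemma f0_pair {a b : ℕ} (h : a < b) : f0 {a, b} = Nat.pair a b := by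
  have hne : ({a, b} : Finset ℕ).Nonempty := ⟨a, by simp⟩
  rw [f0]
  simp only [dif_pos hne]
  congr 1
  · apply le_antisymm
    · exact Finset.min'_le _ a (by simp)
    · apply Finset.le_min'
      intro y hy
      simp only [Finset.mem_insert, Finset.mem_singleton] at hy
      rcases hy with rfl | rfl <;> omega
  · apply le_antisymm
    · apply Finset.max'_le
      intro y hy
      simp only [Finset.mem_insert, Finset.mem_singleton] at hy
      rcases hy with rfl | rfl <;> omega
    · exact Finset.le_max' _ b (by simp)

def E0 : Set (ℕ × ℕ × ℕ) :=
  {q | ∃ a b c : ℕ, a < b ∧ b < c ∧ q = (Nat.pair a b, Nat.pair b c, Nat.pair a c)}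

lemma E0_oriented : Oriented E0 := by
  rintro x y z ⟨a, b, c, hab, hbc, hq⟩
  simp only [Prod.mk.injEq] at hq
  obtain ⟨rfl, rfl, rfl⟩ := hq
  refine ⟨⟨?_, ?_, ?_⟩, ?_, ?_, ?_, ?_, ?_⟩
  · intro h; rw [Nat.pair_eq_pair] at h; omega
  · intro h; rw [Nat.pair_eq_pair] at h; omega
  · intro h; rw [Nat.pair_eq_pair] at h; omega
  all_goals rintro ⟨a', b', c', h1, h2, h3⟩
  all_goals simp only [Prod.mk.injEq, Nat.pair_eq_pair] at h3
  all_goals omega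

lemma hom0 (H : ThreeGraph) : IsPairHom H id E0 f0 := by
  refine ⟨Set.injOn_id _, ?_⟩
  intro e he u v w heq h1 h2
  have h1' : u < v := h1
  have h2' : v < w := h2
  rw [f0_pair h1', f0_pair h2', f0_pair (lt_trans h1' h2')]
  refine ⟨⟨?_, ?_, ?_⟩, u, v, w, h1', h2', rfl⟩
  · intro h; rw [Nat.pair_eq_pair] at h; omega
  · intro h; rw [Nat.pair_eq_pair] at h; omega
  · intro h; rw [Nat.pair_eq_pair] at h; omega



/-- vertex count is positive -/
lemma iv_pos {H : ThreeGraph} {ord : ℕ → ℕ} {E : Set (ℕ × ℕ × ℕ)} {f : Finset ℕ → ℕ}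
    (hf : IsPairHom H ord E f) {E' : Finset (Finset ℕ)}
    (hE' : E' ⊆ H.edges) (hne : E'.Nonempty) : 1 ≤ imageVerts f E' := by
  rw [imageVerts_eq hf hE']
  apply Finset.card_pos.2
  obtain ⟨e, he⟩ := hne
  have hmem : gset (Ftrip ord f e) ∈ TTof ord f E' := Finset.mem_image_of_mem _ he
  have h3 := TT_card3 hf hE' _ hmem
  have : (gset (Ftrip ord f e)).Nonempty := Finset.card_pos.1 (by omega)
  obtain ⟨x, hx⟩ := this
  exact ⟨x, Finset.mem_biUnion.2 ⟨_, hmem, hx⟩⟩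

lemma ie_le {H : ThreeGraph} {ord : ℕ → ℕ} {E : Set (ℕ × ℕ × ℕ)} {f : Finset ℕ → ℕ}
    (hf : IsPairHom H ord E f) {E' : Finset (Finset ℕ)}
    (hE' : E' ⊆ H.edges) : imageEdges ord f E' ≤ H.edges.card := by
  rw [imageEdges_eq hf hE']
  exact le_trans (Finset.card_image_le) (Finset.card_le_card hE')

/-- no Berge cycle in the image forces sparseness -/
lemma noCycle_count {H : ThreeGraph} {ord : ℕ → ℕ} {E : Set (ℕ × ℕ × ℕ)} {f : Finset ℕ → ℕ}
    (hE : Oriented E) (hf : IsPairHom H ord E f) {E' : Finset (Finset ℕ)}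
    (hE' : E' ⊆ H.edges) (hne : E'.Nonempty)
    (hno : ¬ HasBergeCycle {s : Finset ℕ | ∃ e ∈ H.edges, ∃ u v w : ℕ,
      e = ({u, v, w} : Finset ℕ) ∧ ord u < ord v ∧ ord v < ord w ∧
      s = ({f {u, v}, f {v, w}, f {u, w}} : Finset ℕ)}) :
    2 * imageEdges ord f E' + 1 ≤ imageVerts f E' := by
  set TT := TTof ord f E' with hTT
  have hTTne : TT.Nonempty := hne.image _
  have h3 : ∀ s ∈ TT, s.card = 3 := TT_card3 hf hE'
  have hdense : ¬ ((TT.biUnion id).card ≤ 2 * TT.card) := by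
    intro hd
    obtain ⟨t, ht, v, e, hv, hei, hcond⟩ := bergeCycle_of_dense TT h3 hTTne hd
    exact hno ⟨t, ht, v, e, hv, hei, fun i =>
      ⟨TT_subS hf hE' _ (hcond i).1, (hcond i).2.1, (hcond i).2.2⟩⟩
  rw [imageVerts_eq hf hE', imageEdges_eq hf hE', ← TT_card hE hf hE', ← hTT]
  omega

/-- a Berge cycle in the image yields a dense subhypergraph -/
lemma cycle_ratio {H : ThreeGraph} {ord : ℕ → ℕ} {E : Set (ℕ × ℕ × ℕ)} {f : Finset ℕ → ℕ}
    (hE : Oriented E) (hf : IsPairHom H ord E f)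
    (hcyc : HasBergeCycle {s : Finset ℕ | ∃ e ∈ H.edges, ∃ u v w : ℕ,
      e = ({u, v, w} : Finset ℕ) ∧ ord u < ord v ∧ ord v < ord w ∧
      s = ({f {u, v}, f {v, w}, f {u, w}} : Finset ℕ)}) :
    ∃ E' : Finset (Finset ℕ), E' ⊆ H.edges ∧ E'.Nonempty ∧
      imageVerts f E' ≤ 2 * imageEdges ord f E' := by
  classical
  obtain ⟨t, ht, v, e, hv, hei, hcond⟩ := hcyc
  haveI : NeZero t := ⟨by omega⟩
  have hSel : ∀ i : ZMod t, ∃ h ∈ H.edges, gset (Ftrip ord f h) = e i := by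
    intro i
    exact S_elt hf (hcond i).1
  choose hFun hmem hgset using hSel
  set E' : Finset (Finset ℕ) := Finset.univ.image hFun with hE'def
  have hE' : E' ⊆ H.edges := by
    intro x hx
    obtain ⟨i, _, rfl⟩ := Finset.mem_image.1 hx
    exact hmem i
  have hne' : E'.Nonempty := (Finset.univ_nonempty).image _
  have hTTeq : TTof ord f E' = Finset.univ.image (fun i => e i) := by
    rw [TTof, hE'def, Finset.image_image]
    exact Finset.image_congr (fun i _ => hgset i)
  have hcardTT : (TTof ord f E').card = t := by
    rw [hTTeq, Finset.card_image_of_injective _ hei, Finset.card_univ, ZMod.card]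
  have hIE : imageEdges ord f E' = t := by
    rw [imageEdges_eq hf hE', ← TT_card hE hf hE', hcardTT]
  -- i ≠ i + 1
  have hne10 : (1 : ZMod t) ≠ 0 := by
    intro h
    have h1 : (1 : ZMod t).val = 1 % t := ZMod.val_one_eq_one_mod t
    have h2 : 1 % t = 1 := Nat.mod_eq_of_lt (by omega)
    rw [h, ZMod.val_zero] at h1
    omega
  have hvne : ∀ i : ZMod t, v i ≠ v (i + 1) := by
    intro i h
    have := hv h
    have : (1 : ZMod t) = 0 := by
      have h2 := left_eq_add.mp this
      exact h2
    exact hne10 this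
  have hcard3 : ∀ i : ZMod t, (e i).card = 3 := by
    intro i
    rw [← hgset i]
    obtain ⟨⟨d1, d2, d3⟩, _⟩ := Ftrip_mem hf (hmem i)
    exact Finset.card_eq_three.2 ⟨_, _, _, d1, d3, d2, rfl⟩
  have hIV : imageVerts f E' ≤ 2 * t := by
    rw [imageVerts_eq hf hE', hTTeq, Finset.image_biUnion]
    have hsub : (Finset.univ.biUnion fun i => id (e i)) ⊆
        (Finset.univ.image v) ∪ (Finset.univ.biUnion fun i => e i \ {v i, v (i + 1)}) := by
      intro x hx
      obtain ⟨i, _, hxi⟩ := Finset.mem_biUnion.1 hx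
      by_cases hc : x = v i ∨ x = v (i + 1)
      · exact Finset.mem_union_left _ (Finset.mem_image.2 (by
          rcases hc with rfl | rfl
          · exact ⟨i, Finset.mem_univ _, rfl⟩
          · exact ⟨i + 1, Finset.mem_univ _, rfl⟩))
      · push_neg at hc
        exact Finset.mem_union_right _ (Finset.mem_biUnion.2 ⟨i, Finset.mem_univ _,
          Finset.mem_sdiff.2 ⟨hxi, by simp [hc.1, hc.2]⟩⟩)
    have hsd : ∀ i : ZMod t, (e i \ {v i, v (i + 1)}).card ≤ 1 := by
      intro i
      have hpsub : ({v i, v (i + 1)} : Finset ℕ) ⊆ e i := by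
        intro x hx
        simp only [Finset.mem_insert, Finset.mem_singleton] at hx
        rcases hx with rfl | rfl
        · exact (hcond i).2.1
        · exact (hcond i).2.2
      rw [Finset.card_sdiff_of_subset hpsub, Finset.card_pair (hvne i), hcard3 i]
    calc ((Finset.univ.biUnion fun i => id (e i))).card
        ≤ ((Finset.univ.image v) ∪ (Finset.univ.biUnion fun i => e i \ {v i, v (i + 1)})).card :=
          Finset.card_le_card hsub
      _ ≤ (Finset.univ.image v).card + (Finset.univ.biUnion fun i => e i \ {v i, v (i + 1)}).card :=
          Finset.card_union_le _ _
      _ ≤ t + ∑ i : ZMod t, (e i \ {v i, v (i + 1)}).card := by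
          have h1 : (Finset.univ.image v).card ≤ t := by
            refine le_trans Finset.card_image_le ?_
            rw [Finset.card_univ, ZMod.card]
          have h2 := Finset.card_biUnion_le (s := (Finset.univ : Finset (ZMod t)))
            (t := fun i => e i \ {v i, v (i + 1)})
          omega
      _ ≤ t + ∑ _i : ZMod t, 1 := by
          have := Finset.sum_le_sum (fun i (_ : i ∈ Finset.univ) => hsd i)
          omega
      _ ≤ 2 * t := by
          rw [Finset.sum_const, Finset.card_univ, ZMod.card, smul_eq_mul]
          omega
  exact ⟨E', hE', hne', by omega⟩

end AvoidProof

/-- A nonempty 3-graph `H` is avoidable if and only if `m_pair(H) ≥ 1/2`. -/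
theorem avoidable_iff_mpair_ge_half (H : ThreeGraph) (hne : H.edges.Nonempty) :
    Avoidable H ↔ mpair H ≥ 1 / 2 := by
  classical
  have hM1 : 1 ≤ H.edges.card := Finset.card_pos.2 hne
  have hbdd : ∀ (ord : ℕ → ℕ) (E : Set (ℕ × ℕ × ℕ)) (f : Finset ℕ → ℕ),
      IsPairHom H ord E f →
      BddAbove {r : ℝ | ∃ E' : Finset (Finset ℕ), E' ⊆ H.edges ∧ E'.Nonempty ∧
        r = (imageEdges ord f E' : ℝ) / (imageVerts f E' : ℝ)} := by
    intro ord E f hf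
    refine ⟨(H.edges.card : ℝ), ?_⟩
    rintro r ⟨E', h1, h2, rfl⟩
    have hb : (1 : ℝ) ≤ (imageVerts f E' : ℝ) := by
      exact_mod_cast AvoidProof.iv_pos hf h1 h2
    have ha : (imageEdges ord f E' : ℝ) ≤ (H.edges.card : ℝ) := by
      exact_mod_cast AvoidProof.ie_le hf h1
    calc (imageEdges ord f E' : ℝ) / (imageVerts f E' : ℝ)
        ≤ (imageEdges ord f E' : ℝ) := div_le_self (by positivity) hb
      _ ≤ _ := ha
  constructor
  · intro hA
    rw [ge_iff_le, mpair]
    apply le_csInf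
    · exact ⟨_, id, AvoidProof.E0, AvoidProof.f0, AvoidProof.E0_oriented,
        AvoidProof.hom0 H, rfl⟩
    · rintro q ⟨ord, E, f, hE, hf, rfl⟩
      obtain ⟨E', h1, h2, hle⟩ := AvoidProof.cycle_ratio hE hf (hA ord E f hE hf)
      have hb1 : 1 ≤ imageVerts f E' := AvoidProof.iv_pos hf h1 h2
      have hbpos : (0 : ℝ) < (imageVerts f E' : ℝ) := by
        exact_mod_cast Nat.lt_of_lt_of_le Nat.zero_lt_one hb1
      have hhalf : (1 : ℝ) / 2 ≤ (imageEdges ord f E' : ℝ) / (imageVerts f E' : ℝ) := by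
        rw [div_le_div_iff₀ (by norm_num) hbpos]
        have hle' : (imageVerts f E' : ℝ) ≤ 2 * (imageEdges ord f E' : ℝ) := by
          exact_mod_cast hle
        linarith
      exact le_trans hhalf (le_csSup (hbdd ord E f hf) ⟨E', h1, h2, rfl⟩)
  · intro hm ord E f hE hf
    by_contra hno
    have hqQ : sSup {r : ℝ | ∃ E' : Finset (Finset ℕ), E' ⊆ H.edges ∧ E'.Nonempty ∧
        r = (imageEdges ord f E' : ℝ) / (imageVerts f E' : ℝ)} ∈
        {q : ℝ | ∃ (ord : ℕ → ℕ) (E : Set (ℕ × ℕ × ℕ)) (f : Finset ℕ → ℕ),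
          Oriented E ∧ IsPairHom H ord E f ∧
          q = sSup {r : ℝ | ∃ E' : Finset (Finset ℕ), E' ⊆ H.edges ∧ E'.Nonempty ∧
            r = (imageEdges ord f E' : ℝ) / (imageVerts f E' : ℝ)}} :=
      ⟨ord, E, f, hE, hf, rfl⟩
    have hlow : BddBelow {q : ℝ | ∃ (ord : ℕ → ℕ) (E : Set (ℕ × ℕ × ℕ)) (f : Finset ℕ → ℕ),
        Oriented E ∧ IsPairHom H ord E f ∧
        q = sSup {r : ℝ | ∃ E' : Finset (Finset ℕ), E' ⊆ H.edges ∧ E'.Nonempty ∧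
          r = (imageEdges ord f E' : ℝ) / (imageVerts f E' : ℝ)}} := by
      refine ⟨0, ?_⟩
      rintro q' ⟨ord', E'', f', hE', hf', rfl⟩
      exact le_csSup_of_le (hbdd ord' E'' f' hf') ⟨H.edges, subset_rfl, hne, rfl⟩
        (by positivity)
    have h1 : mpair H ≤ sSup {r : ℝ | ∃ E' : Finset (Finset ℕ), E' ⊆ H.edges ∧ E'.Nonempty ∧
        r = (imageEdges ord f E' : ℝ) / (imageVerts f E' : ℝ)} := csInf_le hlow hqQ
    have h2 : sSup {r : ℝ | ∃ E' : Finset (Finset ℕ), E' ⊆ H.edges ∧ E'.Nonempty ∧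
        r = (imageEdges ord f E' : ℝ) / (imageVerts f E' : ℝ)} ≤
        (H.edges.card : ℝ) / (2 * (H.edges.card : ℝ) + 1) := by
      refine csSup_le ?_ ?_
      · exact ⟨(imageEdges ord f H.edges : ℝ) / (imageVerts f H.edges : ℝ),
          H.edges, subset_rfl, hne, rfl⟩
      rintro r ⟨E', hs1, hs2, rfl⟩
      have hc := AvoidProof.noCycle_count hE hf hs1 hs2 hno
      have ha := AvoidProof.ie_le hf hs1
      have hb0 : (0 : ℝ) < (imageVerts f E' : ℝ) := by
        have : 1 ≤ imageVerts f E' := by omega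
        exact_mod_cast Nat.lt_of_lt_of_le Nat.zero_lt_one this
      rw [div_le_div_iff₀ hb0 (by positivity)]
      have hnat : imageEdges ord f E' * (2 * H.edges.card + 1) ≤
          H.edges.card * imageVerts f E' := by nlinarith [hc, ha]
      calc (imageEdges ord f E' : ℝ) * (2 * (H.edges.card : ℝ) + 1)
          = ((imageEdges ord f E' * (2 * H.edges.card + 1) : ℕ) : ℝ) := by push_cast; ring
        _ ≤ ((H.edges.card * imageVerts f E' : ℕ) : ℝ) := by exact_mod_cast hnat
        _ = (H.edges.card : ℝ) * (imageVerts f E' : ℝ) := by push_cast; ring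
    have h3 : (H.edges.card : ℝ) / (2 * (H.edges.card : ℝ) + 1) < 1 / 2 := by
      rw [div_lt_div_iff₀ (by positivity) (by norm_num)]
      have : (1 : ℝ) ≤ (H.edges.card : ℝ) := by exact_mod_cast hM1
      linarith
    linarith
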